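/- The twisted Hermite functions diagonalize the harmonic oscillator under left and right twisted multiplication by H(q,p) := (q²+p²)/2: for all m, n ∈ ℕ, ½(q²+p²)·f_{mn} − ½(∂²f_{mn}/∂q² + ∂²f_{mn}/∂p²) + i(q·∂f_{mn}/∂p − p·∂f_{mn}/∂q) = (2m+1)·f_{mn}, and ½(q²+p²)·f_{mn} − ½(∂²f_{mn}/∂q² + ∂²f_{mn}/∂p²) − i(q·∂f_{mn}/∂p − p·∂f_{mn}/∂q) = (2n+1)·f_{mn}, pointwise on ℝ²; the left-hand sides are the differential-operator expressions for the twisted products H × f_{mn} and f_{mn} × H respectively. -/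

import Mathlib

open MeasureTheory SchwartzMap Complex

noncomputable section

def symp2 (u v : ℝ × ℝ) : ℝ := u.1 * v.2 - u.2 * v.1

def mes2 : Measure (ℝ × ℝ) := (ENNReal.ofReal (2 * Real.pi))⁻¹ • (volume : Measure (ℝ × ℝ))

def twProd2 (f g : ℝ × ℝ → ℂ) : ℝ × ℝ → ℂ := fun u =>
  ∫ s, ∫ t, f (u + s) * g (u + t) * Complex.exp (Complex.I * (symp2 s t : ℂ)) ∂mes2 ∂mes2

/-- The Gaussian `f₀(q,p) = 2 e^{-(q²+p²)/2}`. -/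
def f0 (u : ℝ × ℝ) : ℂ := 2 * Complex.exp (-((u.1 ^ 2 + u.2 ^ 2 : ℝ) : ℂ) / 2)

/-- `a = (q + ip)/√2`. -/
def aop (u : ℝ × ℝ) : ℂ := ((u.1 : ℂ) + Complex.I * (u.2 : ℂ)) / (Real.sqrt 2 : ℂ)

/-- `ā = (q - ip)/√2`. -/
def abar (u : ℝ × ℝ) : ℂ := ((u.1 : ℂ) - Complex.I * (u.2 : ℂ)) / (Real.sqrt 2 : ℂ)

/-- The twisted Hermite functions `f_{mn}`. -/
def fmn (m n : ℕ) : ℝ × ℝ → ℂ := fun u =>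
  ((Real.sqrt (2 ^ (m + n) * m.factorial * n.factorial) : ℝ) : ℂ)⁻¹ *
    ∑ k ∈ Finset.range (min m n + 1),
      (-1 : ℂ) ^ k * (m.choose k : ℂ) * (n.choose k : ℂ) * (k.factorial : ℂ) *
        2 ^ (m + n - k) * abar u ^ (m - k) * aop u ^ (n - k) * f0 u

/-- Partial derivative in the `q` direction. -/
def pdq (f : ℝ × ℝ → ℂ) : ℝ × ℝ → ℂ := fun u => fderiv ℝ f u ((1 : ℝ), (0 : ℝ))

/-- Partial derivative in the `p` direction. -/
def pdp (f : ℝ × ℝ → ℂ) : ℝ × ℝ → ℂ := fun u => fderiv ℝ f u ((0 : ℝ), (1 : ℝ))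

namespace OscAux


def w (u : ℝ × ℝ) : ℂ := (u.1 : ℂ) - Complex.I * u.2
def v (u : ℝ × ℝ) : ℂ := (u.1 : ℂ) + Complex.I * u.2

def G (a b : ℕ) : ℝ × ℝ → ℂ := fun u => w u ^ a * v u ^ b * f0 u

def Gq (a b : ℕ) : ℝ × ℝ → ℂ := fun u =>
  (a : ℂ) * G (a-1) b u + (b : ℂ) * G a (b-1) u
    + (-(1/2) : ℂ) * G (a+1) b u + (-(1/2) : ℂ) * G a (b+1) u

def Gp (a b : ℕ) : ℝ × ℝ → ℂ := fun u =>
  (-Complex.I * a) * G (a-1) b u + (Complex.I * b) * G a (b-1) u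
    + (-(Complex.I/2)) * G (a+1) b u + (Complex.I/2) * G a (b+1) u

def Xq (a b : ℕ) : ℝ × ℝ → ℂ := fun u =>
  (a : ℂ) * Gq (a-1) b u + (b : ℂ) * Gq a (b-1) u
    + (-(1/2) : ℂ) * Gq (a+1) b u + (-(1/2) : ℂ) * Gq a (b+1) u

def Xp (a b : ℕ) : ℝ × ℝ → ℂ := fun u =>
  (-Complex.I * a) * Gp (a-1) b u + (Complex.I * b) * Gp a (b-1) u
    + (-(Complex.I/2)) * Gp (a+1) b u + (Complex.I/2) * Gp a (b+1) u

def Cq : (ℝ × ℝ) →L[ℝ] ℂ := Complex.ofRealCLM.comp (ContinuousLinearMap.fst ℝ ℝ ℝ)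
def Cp : (ℝ × ℝ) →L[ℝ] ℂ := Complex.ofRealCLM.comp (ContinuousLinearMap.snd ℝ ℝ ℝ)

@[simp] lemma Cq_apply (x : ℝ × ℝ) : Cq x = (x.1 : ℂ) := rfl
@[simp] lemma Cp_apply (x : ℝ × ℝ) : Cp x = (x.2 : ℂ) := rfl

lemma hc1 (u : ℝ × ℝ) : HasFDerivAt (fun x : ℝ × ℝ => ((x.1 : ℝ) : ℂ)) Cq u :=
  Complex.ofRealCLM.hasFDerivAt.comp u hasFDerivAt_fst

lemma hc2 (u : ℝ × ℝ) : HasFDerivAt (fun x : ℝ × ℝ => ((x.2 : ℝ) : ℂ)) Cp u :=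
  Complex.ofRealCLM.hasFDerivAt.comp u hasFDerivAt_snd

lemma hw (u : ℝ × ℝ) : HasFDerivAt w (Cq - Complex.I • Cp) u :=
  (hc1 u).sub ((hc2 u).const_mul Complex.I)

lemma hv (u : ℝ × ℝ) : HasFDerivAt v (Cq + Complex.I • Cp) u :=
  (hc1 u).add ((hc2 u).const_mul Complex.I)

lemma hf0 (u : ℝ × ℝ) :
    HasFDerivAt f0 ((f0 u) • (((-(u.1 : ℂ)) • Cq) + ((-(u.2 : ℂ)) • Cp))) u := by
  have h1 : HasFDerivAt (fun x : ℝ × ℝ => -((x.1 ^ 2 + x.2 ^ 2 : ℝ) : ℂ) / 2)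
      ((-(u.1 : ℂ)) • Cq + (-(u.2 : ℂ)) • Cp) u := by
    have hq2 : HasFDerivAt (fun x : ℝ × ℝ => ((x.1 : ℝ) : ℂ) ^ 2)
        ((2 * (u.1 : ℂ) ^ 1) • Cq) u := by
      simpa [Function.comp_def] using (hasDerivAt_pow 2 ((u.1 : ℝ) : ℂ)).comp_hasFDerivAt u (hc1 u)
    have hp2 : HasFDerivAt (fun x : ℝ × ℝ => ((x.2 : ℝ) : ℂ) ^ 2)
        ((2 * (u.2 : ℂ) ^ 1) • Cp) u := by
      simpa [Function.comp_def] using (hasDerivAt_pow 2 ((u.2 : ℝ) : ℂ)).comp_hasFDerivAt u (hc2 u)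
    have h := ((hq2.add hp2).neg).const_mul ((2 : ℂ)⁻¹)
    have heq : (fun x : ℝ × ℝ => (2 : ℂ)⁻¹ * -(((x.1 : ℝ) : ℂ) ^ 2 + ((x.2 : ℝ) : ℂ) ^ 2))
        = (fun x : ℝ × ℝ => -((x.1 ^ 2 + x.2 ^ 2 : ℝ) : ℂ) / 2) := by
      funext x; push_cast; ring
    rw [← heq]
    refine h.congr_fderiv ?_
    ext <;> simp <;> ring
  have h2 := (h1.cexp).const_mul (2 : ℂ)
  refine h2.congr_fderiv ?_
  ext <;> simp [f0] <;> ring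

lemma hG (a b : ℕ) (u : ℝ × ℝ) :
    HasFDerivAt (G a b)
      ((w u ^ a * v u ^ b) • ((f0 u) • (((-(u.1 : ℂ)) • Cq) + ((-(u.2 : ℂ)) • Cp)))
        + (f0 u) • ((w u ^ a) • ((b * v u ^ (b-1)) • (Cq + Complex.I • Cp))
            + (v u ^ b) • ((a * w u ^ (a-1)) • (Cq - Complex.I • Cp)))) u := by
  have hwa : HasFDerivAt (fun x => w x ^ a) ((a * w u ^ (a-1)) • (Cq - Complex.I • Cp)) u :=
    (hasDerivAt_pow a (w u)).comp_hasFDerivAt u (hw u)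
  have hvb : HasFDerivAt (fun x => v x ^ b) ((b * v u ^ (b-1)) • (Cq + Complex.I • Cp)) u :=
    (hasDerivAt_pow b (v u)).comp_hasFDerivAt u (hv u)
  exact ((hwa.mul hvb).mul (hf0 u)).congr_fderiv (by ext <;> simp <;> ring)

lemma diff_G (a b : ℕ) : Differentiable ℝ (G a b) := fun u => (hG a b u).differentiableAt

lemma pdq_G (a b : ℕ) (u : ℝ × ℝ) : pdq (G a b) u = Gq a b u := by
  rw [pdq, (hG a b u).fderiv]
  simp [Gq, G, pow_succ, w, v]
  ring

lemma pdp_G (a b : ℕ) (u : ℝ × ℝ) : pdp (G a b) u = Gp a b u := by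
  rw [pdp, (hG a b u).fderiv]
  simp [Gp, G, pow_succ, w, v]
  ring_nf
  simp [Complex.I_sq]
  ring

lemma fd_comb4 (c1 c2 c3 c4 : ℂ) (f1 f2 f3 f4 : ℝ × ℝ → ℂ)
    (h1 : Differentiable ℝ f1) (h2 : Differentiable ℝ f2)
    (h3 : Differentiable ℝ f3) (h4 : Differentiable ℝ f4) (u e) :
    fderiv ℝ (fun x => c1 * f1 x + c2 * f2 x + c3 * f3 x + c4 * f4 x) u e
      = c1 * fderiv ℝ f1 u e + c2 * fderiv ℝ f2 u e
        + c3 * fderiv ℝ f3 u e + c4 * fderiv ℝ f4 u e := by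
  have H : HasFDerivAt (fun x => c1 * f1 x + c2 * f2 x + c3 * f3 x + c4 * f4 x) _ u := ((((h1 u).hasFDerivAt.const_mul c1).add ((h2 u).hasFDerivAt.const_mul c2)).add
    ((h3 u).hasFDerivAt.const_mul c3)).add ((h4 u).hasFDerivAt.const_mul c4)
  rw [H.fderiv]; simp

lemma fd_sum (t : Finset ℕ) (c : ℕ → ℂ) (f : ℕ → ℝ × ℝ → ℂ)
    (h : ∀ k, Differentiable ℝ (f k)) (u e) :
    fderiv ℝ (fun x => ∑ k ∈ t, c k * f k x) u e = ∑ k ∈ t, c k * fderiv ℝ (f k) u e := by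
  have H : HasFDerivAt (fun x => ∑ k ∈ t, c k * f k x)
      (∑ k ∈ t, c k • fderiv ℝ (f k) u) u :=
    HasFDerivAt.fun_sum (fun k _ => ((h k u).hasFDerivAt.const_mul (c k)))
  rw [H.fderiv]; simp

lemma diff_Gq (a b : ℕ) : Differentiable ℝ (Gq a b) := by
  unfold Gq
  exact ((((diff_G _ _).const_mul _).add ((diff_G _ _).const_mul _)).add
    ((diff_G _ _).const_mul _)).add ((diff_G _ _).const_mul _)

lemma diff_Gp (a b : ℕ) : Differentiable ℝ (Gp a b) := by
  unfold Gp
  exact ((((diff_G _ _).const_mul _).add ((diff_G _ _).const_mul _)).add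
    ((diff_G _ _).const_mul _)).add ((diff_G _ _).const_mul _)

lemma pdq_Gq (a b : ℕ) (u : ℝ × ℝ) : pdq (Gq a b) u = Xq a b u := by
  rw [pdq]
  show fderiv ℝ (fun x => (a : ℂ) * G (a-1) b x + (b : ℂ) * G a (b-1) x
    + (-(1/2) : ℂ) * G (a+1) b x + (-(1/2) : ℂ) * G a (b+1) x) u (1, 0) = _
  rw [fd_comb4 _ _ _ _ _ _ _ _ (diff_G _ _) (diff_G _ _) (diff_G _ _) (diff_G _ _)]
  show (a : ℂ) * pdq (G (a-1) b) u + (b : ℂ) * pdq (G a (b-1)) u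
    + (-(1/2) : ℂ) * pdq (G (a+1) b) u + (-(1/2) : ℂ) * pdq (G a (b+1)) u = _
  rw [pdq_G, pdq_G, pdq_G, pdq_G]; rfl

lemma pdp_Gp (a b : ℕ) (u : ℝ × ℝ) : pdp (Gp a b) u = Xp a b u := by
  rw [pdp]
  show fderiv ℝ (fun x => (-Complex.I * a) * G (a-1) b x + (Complex.I * b) * G a (b-1) x
    + (-(Complex.I/2)) * G (a+1) b x + (Complex.I/2) * G a (b+1) x) u (0, 1) = _
  rw [fd_comb4 _ _ _ _ _ _ _ _ (diff_G _ _) (diff_G _ _) (diff_G _ _) (diff_G _ _)]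
  show (-Complex.I * a) * pdp (G (a-1) b) u + (Complex.I * b) * pdp (G a (b-1)) u
    + (-(Complex.I/2)) * pdp (G (a+1) b) u + (Complex.I/2) * pdp (G a (b+1)) u = _
  rw [pdp_G, pdp_G, pdp_G, pdp_G]; rfl


lemma I3 : Complex.I ^ 3 = -Complex.I := by
  rw [pow_succ, Complex.I_sq]; ring
lemma I4 : Complex.I ^ 4 = 1 := by
  rw [pow_succ, I3]; simp [Complex.I_mul_I]
lemma I5 : Complex.I ^ 5 = Complex.I := by
  rw [pow_succ, I4]; ring
lemma I6 : Complex.I ^ 6 = -1 := by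
  rw [pow_succ, I5, Complex.I_mul_I]
lemma I7 : Complex.I ^ 7 = -Complex.I := by
  rw [pow_succ, I6]; ring

lemma keyL (a b : ℕ) (u : ℝ × ℝ) :
    (((u.1 ^ 2 + u.2 ^ 2 : ℝ) : ℂ) / 2) * G a b u - (1/2) * (Xq a b u + Xp a b u)
      + Complex.I * ((u.1 : ℂ) * Gp a b u - (u.2 : ℂ) * Gq a b u)
    = (2 * (a : ℂ) + 1) * G a b u - 2 * (a : ℂ) * (b : ℂ) * G (a-1) (b-1) u := by
  rcases a with _|a <;> rcases b with _|b <;>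
      simp only [Xq, Xp, Gq, Gp, G, Nat.zero_sub, Nat.add_sub_cancel, Nat.sub_zero,
        Nat.cast_zero, Nat.cast_succ, Nat.cast_ofNat, pow_succ, pow_zero] <;>
      push_cast <;> simp only [w, v] <;> ring_nf <;>
      simp only [Complex.I_sq, I3, I4, I5, I6, I7] <;> ring_nf


lemma keyR (a b : ℕ) (u : ℝ × ℝ) :
    (((u.1 ^ 2 + u.2 ^ 2 : ℝ) : ℂ) / 2) * G a b u - (1/2) * (Xq a b u + Xp a b u)
      - Complex.I * ((u.1 : ℂ) * Gp a b u - (u.2 : ℂ) * Gq a b u)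
    = (2 * (b : ℂ) + 1) * G a b u - 2 * (a : ℂ) * (b : ℂ) * G (a-1) (b-1) u := by
  rcases a with _|a <;> rcases b with _|b <;>
      simp only [Xq, Xp, Gq, Gp, G, Nat.zero_sub, Nat.add_sub_cancel, Nat.sub_zero,
        Nat.cast_zero, Nat.cast_succ, Nat.cast_ofNat, pow_succ, pow_zero] <;>
      push_cast <;> simp only [w, v] <;> ring_nf <;>
      simp only [Complex.I_sq, I3, I4, I5, I6, I7] <;> ring_nf


def d (m n k : ℕ) : ℂ :=
  ((Real.sqrt (2 ^ (m + n) * m.factorial * n.factorial) : ℝ) : ℂ)⁻¹ *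
    ((-1) ^ k * (m.choose k : ℂ) * (n.choose k : ℂ) * (k.factorial : ℂ) * 2 ^ (m + n - k)
      * ((Real.sqrt 2 : ℝ) : ℂ)⁻¹ ^ (m - k) * ((Real.sqrt 2 : ℝ) : ℂ)⁻¹ ^ (n - k))

lemma fmn_eq (m n : ℕ) : fmn m n
    = fun u => ∑ k ∈ Finset.range (min m n + 1), d m n k * G (m-k) (n-k) u := by
  funext u
  rw [fmn, Finset.mul_sum]
  refine Finset.sum_congr rfl fun k _ => ?_
  simp only [d, G, abar, aop, w, v, div_eq_mul_inv, mul_pow]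
  ring

lemma d_rec (m n k : ℕ) (hm : k < m) (hn : k < n) :
    d m n k * (2 * ((m - k : ℕ) : ℂ) * ((n - k : ℕ) : ℂ))
      = -(2 * ((k : ℂ) + 1)) * d m n (k + 1) := by
  unfold d
  have hrr : ((Real.sqrt 2 : ℝ) : ℂ)⁻¹ * ((Real.sqrt 2 : ℝ) : ℂ)⁻¹ = (2 : ℂ)⁻¹ := by
    rw [← mul_inv, ← Complex.ofReal_mul, Real.mul_self_sqrt (by norm_num)]
    norm_num
  have e1 := congrArg (fun t : ℕ => (t : ℂ)) (Nat.choose_succ_right_eq m k)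
  have e2 := congrArg (fun t : ℕ => (t : ℂ)) (Nat.choose_succ_right_eq n k)
  simp only [Nat.cast_mul, Nat.cast_add, Nat.cast_one] at e1 e2
  rw [show m - k = m - (k+1) + 1 by omega] at e1
  rw [show n - k = n - (k+1) + 1 by omega] at e2
  push_cast at e1 e2
  rw [show m + n - k = (m + n - (k+1)) + 1 by omega, pow_succ (2 : ℂ)]
  rw [show m - k = (m - (k+1)) + 1 by omega, pow_succ (((Real.sqrt 2 : ℝ) : ℂ))⁻¹]
  rw [show n - k = (n - (k+1)) + 1 by omega, pow_succ (((Real.sqrt 2 : ℝ) : ℂ))⁻¹]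
  rw [Nat.factorial_succ, pow_succ (-1 : ℂ)]
  push_cast
  set c0 : ℂ := ((Real.sqrt (2 ^ (m + n) * m.factorial * n.factorial) : ℝ) : ℂ)⁻¹
  set r : ℂ := ((Real.sqrt 2 : ℝ) : ℂ)⁻¹
  set P2 : ℂ := 2 ^ (m + n - (k + 1))
  set Pm : ℂ := r ^ (m - (k + 1))
  set Pn : ℂ := r ^ (n - (k + 1))
  set S : ℂ := 2 * c0 * (-1 : ℂ) ^ k * (k.factorial : ℂ) * P2 * Pm * Pn
  linear_combination (-2 * S * (r * r) * ((m.choose k : ℂ) * (((m - (k+1) : ℕ) : ℂ) + 1))) * e2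
    + (-2 * S * (r * r) * ((n.choose (k+1) : ℂ) * ((k : ℂ) + 1))) * e1
    + (2 * S * ((m.choose (k+1) : ℂ) * (n.choose (k+1) : ℂ) * ((k : ℂ) + 1) ^ 2)) * hrr


lemma main_sum (m n : ℕ) (u : ℝ × ℝ) :
    ∑ k ∈ Finset.range (min m n + 1),
        d m n k * (2 * ((m-k : ℕ) : ℂ) * ((n-k : ℕ) : ℂ) * G (m-k-1) (n-k-1) u)
      = ∑ k ∈ Finset.range (min m n + 1), -(2 * (k : ℂ)) * (d m n k * G (m-k) (n-k) u) := by
  rw [Finset.sum_range_succ, Finset.sum_range_succ']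
  have h1 : d m n (min m n) * (2 * ((m - min m n : ℕ) : ℂ) * ((n - min m n : ℕ) : ℂ)
      * G (m - min m n - 1) (n - min m n - 1) u) = 0 := by
    have h : m - min m n = 0 ∨ n - min m n = 0 := by omega
    rcases h with h | h <;> rw [h] <;> simp
  rw [h1, add_zero]
  have h2 : -(2 * ((0 : ℕ) : ℂ)) * (d m n 0 * G (m-0) (n-0) u) = 0 := by simp
  rw [h2, add_zero]
  refine Finset.sum_congr rfl fun k hk => ?_
  have hk' : k < min m n := Finset.mem_range.mp hk
  have hrec := d_rec m n k (by omega) (by omega)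
  rw [show m - k - 1 = m - (k+1) by omega, show n - k - 1 = n - (k+1) by omega]
  push_cast
  calc d m n k * (2 * ((m-k : ℕ) : ℂ) * ((n-k : ℕ) : ℂ) * G (m-(k+1)) (n-(k+1)) u)
      = (d m n k * (2 * ((m-k : ℕ) : ℂ) * ((n-k : ℕ) : ℂ))) * G (m-(k+1)) (n-(k+1)) u := by
        ring
    _ = (-(2 * ((k : ℂ) + 1)) * d m n (k+1)) * G (m-(k+1)) (n-(k+1)) u := by rw [hrec]
    _ = -(2 * ((k : ℂ) + 1)) * (d m n (k+1) * G (m-(k+1)) (n-(k+1)) u) := by ring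

lemma pdq_fmn (m n : ℕ) : pdq (fmn m n)
    = fun u => ∑ k ∈ Finset.range (min m n + 1), d m n k * Gq (m-k) (n-k) u := by
  funext u
  rw [fmn_eq]
  show fderiv ℝ (fun x => ∑ k ∈ Finset.range (min m n + 1), d m n k * G (m-k) (n-k) x)
    u (1, 0) = _
  rw [fd_sum _ _ _ (fun k => diff_G _ _)]
  exact Finset.sum_congr rfl fun k _ => by
    rw [show fderiv ℝ (G (m-k) (n-k)) u ((1 : ℝ), (0 : ℝ)) = pdq (G (m-k) (n-k)) u from rfl,
      pdq_G]

lemma pdp_fmn (m n : ℕ) : pdp (fmn m n)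
    = fun u => ∑ k ∈ Finset.range (min m n + 1), d m n k * Gp (m-k) (n-k) u := by
  funext u
  rw [fmn_eq]
  show fderiv ℝ (fun x => ∑ k ∈ Finset.range (min m n + 1), d m n k * G (m-k) (n-k) x)
    u (0, 1) = _
  rw [fd_sum _ _ _ (fun k => diff_G _ _)]
  exact Finset.sum_congr rfl fun k _ => by
    rw [show fderiv ℝ (G (m-k) (n-k)) u ((0 : ℝ), (1 : ℝ)) = pdp (G (m-k) (n-k)) u from rfl,
      pdp_G]

lemma pdqq_fmn (m n : ℕ) : pdq (pdq (fmn m n))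
    = fun u => ∑ k ∈ Finset.range (min m n + 1), d m n k * Xq (m-k) (n-k) u := by
  rw [pdq_fmn]
  funext u
  show fderiv ℝ (fun x => ∑ k ∈ Finset.range (min m n + 1), d m n k * Gq (m-k) (n-k) x)
    u (1, 0) = _
  rw [fd_sum _ _ _ (fun k => diff_Gq _ _)]
  exact Finset.sum_congr rfl fun k _ => by
    rw [show fderiv ℝ (Gq (m-k) (n-k)) u ((1 : ℝ), (0 : ℝ)) = pdq (Gq (m-k) (n-k)) u from rfl,
      pdq_Gq]

lemma pdpp_fmn (m n : ℕ) : pdp (pdp (fmn m n))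
    = fun u => ∑ k ∈ Finset.range (min m n + 1), d m n k * Xp (m-k) (n-k) u := by
  rw [pdp_fmn]
  funext u
  show fderiv ℝ (fun x => ∑ k ∈ Finset.range (min m n + 1), d m n k * Gp (m-k) (n-k) x)
    u (0, 1) = _
  rw [fd_sum _ _ _ (fun k => diff_Gp _ _)]
  exact Finset.sum_congr rfl fun k _ => by
    rw [show fderiv ℝ (Gp (m-k) (n-k)) u ((0 : ℝ), (1 : ℝ)) = pdp (Gp (m-k) (n-k)) u from rfl,
      pdp_Gp]


end OscAux

/-- The twisted Hermite functions diagonalize the harmonic oscillator: the displayed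
differential expressions are `H × f_{mn}` and `f_{mn} × H` for `H = (q²+p²)/2`. -/
theorem fmn_oscillator_eigenfunctions (m n : ℕ) (u : ℝ × ℝ) :
    (((u.1 ^ 2 + u.2 ^ 2 : ℝ) : ℂ) / 2) * fmn m n u
        - (1 / 2) * (pdq (pdq (fmn m n)) u + pdp (pdp (fmn m n)) u)
        + Complex.I * ((u.1 : ℂ) * pdp (fmn m n) u - (u.2 : ℂ) * pdq (fmn m n) u)
      = ((2 * m + 1 : ℕ) : ℂ) * fmn m n u ∧
    (((u.1 ^ 2 + u.2 ^ 2 : ℝ) : ℂ) / 2) * fmn m n u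
        - (1 / 2) * (pdq (pdq (fmn m n)) u + pdp (pdp (fmn m n)) u)
        - Complex.I * ((u.1 : ℂ) * pdp (fmn m n) u - (u.2 : ℂ) * pdq (fmn m n) u)
      = ((2 * n + 1 : ℕ) : ℂ) * fmn m n u := by
  constructor
  · rw [OscAux.pdqq_fmn, OscAux.pdpp_fmn, OscAux.pdq_fmn, OscAux.pdp_fmn, OscAux.fmn_eq]
    dsimp only
    open OscAux in
    calc (((u.1 ^ 2 + u.2 ^ 2 : ℝ) : ℂ) / 2)
            * (∑ k ∈ Finset.range (min m n + 1), d m n k * G (m-k) (n-k) u)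
          - (1 / 2) * ((∑ k ∈ Finset.range (min m n + 1), d m n k * Xq (m-k) (n-k) u)
              + (∑ k ∈ Finset.range (min m n + 1), d m n k * Xp (m-k) (n-k) u))
          + Complex.I * ((u.1 : ℂ)
                * (∑ k ∈ Finset.range (min m n + 1), d m n k * Gp (m-k) (n-k) u)
              - (u.2 : ℂ) * (∑ k ∈ Finset.range (min m n + 1), d m n k * Gq (m-k) (n-k) u))
        = ∑ k ∈ Finset.range (min m n + 1),
            (d m n k * ((2 * ((m-k : ℕ) : ℂ) + 1) * G (m-k) (n-k) u)
              - d m n k * (2 * ((m-k : ℕ) : ℂ) * ((n-k : ℕ) : ℂ) * G (m-k-1) (n-k-1) u)) := by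
          simp only [Finset.mul_sum, ← Finset.sum_add_distrib, ← Finset.sum_sub_distrib]
          refine Finset.sum_congr rfl fun k hk => ?_
          linear_combination (d m n k) * keyL (m-k) (n-k) u
      _ = (∑ k ∈ Finset.range (min m n + 1),
              d m n k * ((2 * ((m-k : ℕ) : ℂ) + 1) * G (m-k) (n-k) u))
            - ∑ k ∈ Finset.range (min m n + 1),
                d m n k * (2 * ((m-k : ℕ) : ℂ) * ((n-k : ℕ) : ℂ) * G (m-k-1) (n-k-1) u) := by
          rw [Finset.sum_sub_distrib]
      _ = (∑ k ∈ Finset.range (min m n + 1),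
              d m n k * ((2 * ((m-k : ℕ) : ℂ) + 1) * G (m-k) (n-k) u))
            - ∑ k ∈ Finset.range (min m n + 1),
                -(2 * (k : ℂ)) * (d m n k * G (m-k) (n-k) u) := by
          rw [main_sum]
      _ = ∑ k ∈ Finset.range (min m n + 1),
            ((2 * m + 1 : ℕ) : ℂ) * (d m n k * G (m-k) (n-k) u) := by
          rw [← Finset.sum_sub_distrib]
          refine Finset.sum_congr rfl fun k hk => ?_
          have hkm : k ≤ m := by have := Finset.mem_range.mp hk; omega
          have hc : ((m - k : ℕ) : ℂ) = (m : ℂ) - (k : ℂ) := by push_cast [hkm]; ring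
          rw [hc]; push_cast; ring
      _ = ((2 * m + 1 : ℕ) : ℂ)
            * ∑ k ∈ Finset.range (min m n + 1), d m n k * G (m-k) (n-k) u := by
          rw [Finset.mul_sum]
  · rw [OscAux.pdqq_fmn, OscAux.pdpp_fmn, OscAux.pdq_fmn, OscAux.pdp_fmn, OscAux.fmn_eq]
    dsimp only
    open OscAux in
    calc (((u.1 ^ 2 + u.2 ^ 2 : ℝ) : ℂ) / 2)
            * (∑ k ∈ Finset.range (min m n + 1), d m n k * G (m-k) (n-k) u)
          - (1 / 2) * ((∑ k ∈ Finset.range (min m n + 1), d m n k * Xq (m-k) (n-k) u)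
              + (∑ k ∈ Finset.range (min m n + 1), d m n k * Xp (m-k) (n-k) u))
          - Complex.I * ((u.1 : ℂ)
                * (∑ k ∈ Finset.range (min m n + 1), d m n k * Gp (m-k) (n-k) u)
              - (u.2 : ℂ) * (∑ k ∈ Finset.range (min m n + 1), d m n k * Gq (m-k) (n-k) u))
        = ∑ k ∈ Finset.range (min m n + 1),
            (d m n k * ((2 * ((n-k : ℕ) : ℂ) + 1) * G (m-k) (n-k) u)
              - d m n k * (2 * ((m-k : ℕ) : ℂ) * ((n-k : ℕ) : ℂ) * G (m-k-1) (n-k-1) u)) := by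
          simp only [Finset.mul_sum, ← Finset.sum_add_distrib, ← Finset.sum_sub_distrib]
          refine Finset.sum_congr rfl fun k hk => ?_
          linear_combination (d m n k) * keyR (m-k) (n-k) u
      _ = (∑ k ∈ Finset.range (min m n + 1),
              d m n k * ((2 * ((n-k : ℕ) : ℂ) + 1) * G (m-k) (n-k) u))
            - ∑ k ∈ Finset.range (min m n + 1),
                d m n k * (2 * ((m-k : ℕ) : ℂ) * ((n-k : ℕ) : ℂ) * G (m-k-1) (n-k-1) u) := by
          rw [Finset.sum_sub_distrib]
      _ = (∑ k ∈ Finset.range (min m n + 1),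
              d m n k * ((2 * ((n-k : ℕ) : ℂ) + 1) * G (m-k) (n-k) u))
            - ∑ k ∈ Finset.range (min m n + 1),
                -(2 * (k : ℂ)) * (d m n k * G (m-k) (n-k) u) := by
          rw [main_sum]
      _ = ∑ k ∈ Finset.range (min m n + 1),
            ((2 * n + 1 : ℕ) : ℂ) * (d m n k * G (m-k) (n-k) u) := by
          rw [← Finset.sum_sub_distrib]
          refine Finset.sum_congr rfl fun k hk => ?_
          have hkn : k ≤ n := by have := Finset.mem_range.mp hk; omega
          have hc : ((n - k : ℕ) : ℂ) = (n : ℂ) - (k : ℂ) := by push_cast [hkn]; ring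
          rw [hc]; push_cast; ring
      _ = ((2 * n + 1 : ℕ) : ℂ)
            * ∑ k ∈ Finset.range (min m n + 1), d m n k * G (m-k) (n-k) u := by
          rw [Finset.mul_sum]
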